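/- In the group G_n (iterated semidirect product of 2n+1 copies of ℤ with generators g₁,...,g_{2n+1} and relations: g_j g₁ = g₁⁻¹ g_j for even j, g_{j+1} g_j = g₁ g_j g_{j+1} for even j, all other pairs of generators commute), for all x₁,...,xₙ ∈ ℤ and k₁,...,kₙ ∈ ℤ: (g₂^{x₁} g₄^{x₂} ⋯ g_{2n}^{xₙ}) (g₃^{k₁} g₅^{k₂} ⋯ g_{2n+1}^{kₙ}) (g₂^{x₁} ⋯ g_{2n}^{xₙ})⁻¹ = g₁^{-p} g₃^{k₁} ⋯ g_{2n+1}^{kₙ}, where p = Σᵢ kᵢ xᵢ' (-1)^{x₁+⋯+x_{i-1}} and xᵢ' = xᵢ mod 2 ∈ {0,1}. -/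

import Mathlib

/-- The defining relators of the group `Gₙ`: generators are indexed by `{1, …, 2n+1}`;
for even `j`, `g_j g₁ g_j⁻¹ = g₁⁻¹` and `g_{j+1} g_j g_{j+1}⁻¹ = g₁ g_j`;
all other pairs of generators commute. -/
def relsG (n : ℕ) : Set (FreeGroup {i : ℕ // 1 ≤ i ∧ i ≤ 2*n+1}) :=
  { w | (∃ j : {i : ℕ // 1 ≤ i ∧ i ≤ 2*n+1}, j.1 % 2 = 0 ∧
          w = FreeGroup.of j * FreeGroup.of ⟨1, by omega⟩ * (FreeGroup.of j)⁻¹ *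
              FreeGroup.of ⟨1, by omega⟩) ∨
        (∃ j j1 : {i : ℕ // 1 ≤ i ∧ i ≤ 2*n+1}, j.1 % 2 = 0 ∧ j1.1 = j.1 + 1 ∧
          w = FreeGroup.of j1 * FreeGroup.of j * (FreeGroup.of j1)⁻¹ *
              (FreeGroup.of ⟨1, by omega⟩ * FreeGroup.of j)⁻¹) ∨
        (∃ a b : {i : ℕ // 1 ≤ i ∧ i ≤ 2*n+1},
          ¬ ((a.1 = 1 ∧ b.1 % 2 = 0) ∨ (b.1 = 1 ∧ a.1 % 2 = 0) ∨
             (b.1 % 2 = 0 ∧ a.1 = b.1 + 1) ∨ (a.1 % 2 = 0 ∧ b.1 = a.1 + 1)) ∧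
          w = FreeGroup.of a * FreeGroup.of b * (FreeGroup.of a)⁻¹ * (FreeGroup.of b)⁻¹) }

/-- The polycyclic group `Gₙ` of Hirsch length `2n+1`. -/
abbrev Gn (n : ℕ) := PresentedGroup (relsG n)

/-- The generator `g_i` of `Gₙ` (1-based index, `1 ≤ i ≤ 2n+1`). -/
def gg (n : ℕ) (i : ℕ) : Gn n :=
  if h : 1 ≤ i ∧ i ≤ 2*n+1 then PresentedGroup.of ⟨i, h⟩ else 1

/-- `(-1)^m` for an integer `m`: `1` if `m` is even, `-1` if `m` is odd. -/
def eps (m : ℤ) : ℤ := if m % 2 = 0 then 1 else -1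

lemma rel_one (n : ℕ) {r : FreeGroup {i : ℕ // 1 ≤ i ∧ i ≤ 2*n+1}} (h : r ∈ relsG n) :
    PresentedGroup.mk (relsG n) r = 1 := by
  have : r ∈ Subgroup.normalClosure (relsG n) := Subgroup.subset_normalClosure h
  exact (QuotientGroup.eq_one_iff r).2 this

lemma gg_eq (n i : ℕ) (h : 1 ≤ i ∧ i ≤ 2*n+1) : gg n i = PresentedGroup.of ⟨i, h⟩ := by
  simp [gg, h]

-- g_j g₁ g_j⁻¹ = g₁⁻¹ for even j in range
lemma rel1 (n j : ℕ) (h1 : 1 ≤ j) (h2 : j ≤ 2*n+1) (hj : j % 2 = 0) :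
    gg n j * gg n 1 * (gg n j)⁻¹ = (gg n 1)⁻¹ := by
  have hn : (1:ℕ) ≤ 2*n+1 := by omega
  have h := rel_one n (Or.inl ⟨⟨j, h1, h2⟩, hj, rfl⟩)
  rw [gg_eq n j ⟨h1, h2⟩, gg_eq n 1 ⟨le_refl 1, hn⟩]
  simp only [PresentedGroup.of, map_mul, map_inv] at h ⊢
  rw [mul_eq_one_iff_eq_inv] at h
  exact h

lemma rel2 (n j : ℕ) (h1 : 1 ≤ j) (h2 : j + 1 ≤ 2*n+1) (hj : j % 2 = 0) :
    gg n (j+1) * gg n j * (gg n (j+1))⁻¹ = gg n 1 * gg n j := by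
  have hn : (1:ℕ) ≤ 2*n+1 := by omega
  have h := rel_one n (Or.inr (Or.inl ⟨⟨j, h1, by omega⟩, ⟨j+1, by omega, h2⟩, hj, rfl, rfl⟩))
  rw [gg_eq n (j+1) ⟨by omega, h2⟩, gg_eq n j ⟨h1, by omega⟩, gg_eq n 1 ⟨le_refl 1, hn⟩]
  simp only [PresentedGroup.of, map_mul, map_inv] at h ⊢
  rw [mul_inv_eq_one, ← eq_comm] at h
  exact h.symm ▸ rfl

lemma rel3 (n a b : ℕ) (ha1 : 1 ≤ a) (ha2 : a ≤ 2*n+1) (hb1 : 1 ≤ b) (hb2 : b ≤ 2*n+1)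
    (h : ¬ ((a = 1 ∧ b % 2 = 0) ∨ (b = 1 ∧ a % 2 = 0) ∨
         (b % 2 = 0 ∧ a = b + 1) ∨ (a % 2 = 0 ∧ b = a + 1))) :
    Commute (gg n a) (gg n b) := by
  have hrel := rel_one n (Or.inr (Or.inr ⟨⟨a, ha1, ha2⟩, ⟨b, hb1, hb2⟩, h, rfl⟩))
  rw [gg_eq n a ⟨ha1, ha2⟩, gg_eq n b ⟨hb1, hb2⟩]
  simp only [PresentedGroup.of, map_mul, map_inv] at hrel ⊢
  exact commutatorElement_eq_one_iff_commute.1 (by rw [commutatorElement_def]; exact hrel)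

lemma eps_succ (m : ℤ) : eps (m + 1) = -eps m := by
  unfold eps; split_ifs <;> omega

lemma eps_add (a b : ℤ) : eps (a + b) = eps a * eps b := by
  unfold eps; split_ifs <;> norm_num <;> omega

section
variable (n : ℕ)

-- a z a⁻¹ = z⁻¹ for a = g_{2i+2}, i < n
lemma az (i : ℕ) (hi : i < n) :
    gg n (2*i+2) * gg n 1 * (gg n (2*i+2))⁻¹ = (gg n 1)⁻¹ :=
  rel1 n (2*i+2) (by omega) (by omega) (by omega)

lemma azpow (i : ℕ) (hi : i < n) (m : ℤ) :
    gg n (2*i+2) * (gg n 1) ^ m * (gg n (2*i+2))⁻¹ = (gg n 1) ^ (-m) := by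
  rw [← conj_zpow, az n i hi, ← zpow_neg_one, ← zpow_mul]
  ring_nf

lemma azpowinv (i : ℕ) (hi : i < n) (m : ℤ) :
    (gg n (2*i+2))⁻¹ * (gg n 1) ^ m * gg n (2*i+2) = (gg n 1) ^ (-m) := by
  have h := azpow n i hi (-m)
  have : (gg n 1) ^ m = gg n (2*i+2) * (gg n 1) ^ (-m) * (gg n (2*i+2))⁻¹ := by
    rw [h]; ring_nf
  rw [this]; group

lemma axz (i : ℕ) (hi : i < n) (x m : ℤ) :
    gg n (2*i+2) ^ x * (gg n 1) ^ m * (gg n (2*i+2)) ^ (-x) = (gg n 1) ^ (m * eps x) := by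
  induction x using Int.induction_on with
  | zero => simp [eps]
  | succ j ih =>
      have e1 : gg n (2*i+2) ^ ((j:ℤ)+1) = gg n (2*i+2) * gg n (2*i+2) ^ (j:ℤ) := by
        rw [zpow_add, zpow_one]; group
      have e2 : gg n (2*i+2) ^ (-((j:ℤ)+1)) = gg n (2*i+2) ^ (-(j:ℤ)) * (gg n (2*i+2))⁻¹ := by
        rw [show -((j:ℤ)+1) = -(j:ℤ) + (-1) by ring, zpow_add, zpow_neg_one]
      calc gg n (2*i+2) ^ ((j:ℤ)+1) * (gg n 1) ^ m * gg n (2*i+2) ^ (-((j:ℤ)+1))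
          = gg n (2*i+2) * (gg n (2*i+2) ^ (j:ℤ) * (gg n 1) ^ m * gg n (2*i+2) ^ (-(j:ℤ))) *
            (gg n (2*i+2))⁻¹ := by rw [e1, e2]; group
        _ = gg n (2*i+2) * (gg n 1) ^ (m * eps (j:ℤ)) * (gg n (2*i+2))⁻¹ := by rw [ih]
        _ = (gg n 1) ^ (-(m * eps (j:ℤ))) := azpow n i hi _
        _ = (gg n 1) ^ (m * eps ((j:ℤ)+1)) := by rw [eps_succ]; ring_nf
  | pred j ih =>
      have e1 : gg n (2*i+2) ^ (-(j:ℤ)-1) = (gg n (2*i+2))⁻¹ * gg n (2*i+2) ^ (-(j:ℤ)) := by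
        rw [show -(j:ℤ)-1 = (-1) + (-(j:ℤ)) by ring, zpow_add, zpow_neg_one]
      have e2 : gg n (2*i+2) ^ (-(-(j:ℤ)-1)) = gg n (2*i+2) ^ (-(-(j:ℤ))) * gg n (2*i+2) := by
        rw [show -(-(j:ℤ)-1) = -(-(j:ℤ)) + 1 by ring, zpow_add, zpow_one]
      calc gg n (2*i+2) ^ (-(j:ℤ)-1) * (gg n 1) ^ m * gg n (2*i+2) ^ (-(-(j:ℤ)-1))
          = (gg n (2*i+2))⁻¹ * (gg n (2*i+2) ^ (-(j:ℤ)) * (gg n 1) ^ m *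
              gg n (2*i+2) ^ (-(-(j:ℤ)))) * gg n (2*i+2) := by rw [e1, e2]; group
        _ = (gg n (2*i+2))⁻¹ * (gg n 1) ^ (m * eps (-(j:ℤ))) * gg n (2*i+2) := by rw [ih]
        _ = (gg n 1) ^ (-(m * eps (-(j:ℤ)))) := azpowinv n i hi _
        _ = (gg n 1) ^ (m * eps (-(j:ℤ)-1)) := by
              rw [show eps (-(j:ℤ)-1) = -eps (-(j:ℤ)) by
                    rw [show -(j:ℤ) = (-(j:ℤ)-1) + 1 by ring, eps_succ]; ring]
              ring_nf

lemma ab (i : ℕ) (hi : i < n) :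
    gg n (2*i+2) * gg n (2*i+3) * (gg n (2*i+2))⁻¹ = (gg n 1)⁻¹ * gg n (2*i+3) := by
  have h : gg n (2*i+3) * gg n (2*i+2) * (gg n (2*i+3))⁻¹ = gg n 1 * gg n (2*i+2) := by
    have := rel2 n (2*i+2) (by omega) (by omega) (by omega)
    convert this using 3 <;> omega
  have h1 : gg n (2*i+3) * gg n (2*i+2) = gg n 1 * gg n (2*i+2) * gg n (2*i+3) := by
    rw [← h]; group
  have h2 : gg n (2*i+2) * gg n (2*i+3) =
      (gg n 1)⁻¹ * (gg n (2*i+3) * gg n (2*i+2)) := by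
    rw [h1]; group
  calc gg n (2*i+2) * gg n (2*i+3) * (gg n (2*i+2))⁻¹
      = (gg n 1)⁻¹ * (gg n (2*i+3) * gg n (2*i+2)) * (gg n (2*i+2))⁻¹ := by rw [← h2]
    _ = (gg n 1)⁻¹ * gg n (2*i+3) := by group

lemma abinv (i : ℕ) (hi : i < n) :
    (gg n (2*i+2))⁻¹ * gg n (2*i+3) * gg n (2*i+2) = (gg n 1)⁻¹ * gg n (2*i+3) := by
  have hz : gg n (2*i+2) * (gg n 1)⁻¹ * (gg n (2*i+2))⁻¹ = gg n 1 := by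
    have := azpow n i hi (-1)
    simpa [zpow_neg_one] using this
  have key : gg n (2*i+2) * ((gg n 1)⁻¹ * gg n (2*i+3)) * (gg n (2*i+2))⁻¹ = gg n (2*i+3) := by
    calc gg n (2*i+2) * ((gg n 1)⁻¹ * gg n (2*i+3)) * (gg n (2*i+2))⁻¹
        = (gg n (2*i+2) * (gg n 1)⁻¹ * (gg n (2*i+2))⁻¹) *
          (gg n (2*i+2) * gg n (2*i+3) * (gg n (2*i+2))⁻¹) := by group
      _ = gg n 1 * ((gg n 1)⁻¹ * gg n (2*i+3)) := by rw [hz, ab n i hi]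
      _ = gg n (2*i+3) := by group
  calc (gg n (2*i+2))⁻¹ * gg n (2*i+3) * gg n (2*i+2)
      = (gg n (2*i+2))⁻¹ *
        (gg n (2*i+2) * ((gg n 1)⁻¹ * gg n (2*i+3)) * (gg n (2*i+2))⁻¹) * gg n (2*i+2) := by
        rw [key]
    _ = (gg n 1)⁻¹ * gg n (2*i+3) := by group

lemma axb (i : ℕ) (hi : i < n) (x : ℤ) :
    gg n (2*i+2) ^ x * gg n (2*i+3) * gg n (2*i+2) ^ (-x) =
      (gg n 1) ^ (-(x % 2)) * gg n (2*i+3) := by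
  induction x using Int.induction_on with
  | zero => simp
  | succ j ih =>
      have e1 : gg n (2*i+2) ^ ((j:ℤ)+1) = gg n (2*i+2) * gg n (2*i+2) ^ (j:ℤ) := by
        rw [zpow_add, zpow_one]; group
      have e2 : gg n (2*i+2) ^ (-((j:ℤ)+1)) = gg n (2*i+2) ^ (-(j:ℤ)) * (gg n (2*i+2))⁻¹ := by
        rw [show -((j:ℤ)+1) = -(j:ℤ) + (-1) by ring, zpow_add, zpow_neg_one]
      calc gg n (2*i+2) ^ ((j:ℤ)+1) * gg n (2*i+3) * gg n (2*i+2) ^ (-((j:ℤ)+1))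
          = gg n (2*i+2) * (gg n (2*i+2) ^ (j:ℤ) * gg n (2*i+3) * gg n (2*i+2) ^ (-(j:ℤ))) *
            (gg n (2*i+2))⁻¹ := by rw [e1, e2]; group
        _ = gg n (2*i+2) * ((gg n 1) ^ (-((j:ℤ) % 2)) * gg n (2*i+3)) * (gg n (2*i+2))⁻¹ := by
            rw [ih]
        _ = (gg n (2*i+2) * (gg n 1) ^ (-((j:ℤ) % 2)) * (gg n (2*i+2))⁻¹) *
            (gg n (2*i+2) * gg n (2*i+3) * (gg n (2*i+2))⁻¹) := by group
        _ = (gg n 1) ^ ((j:ℤ) % 2) * ((gg n 1)⁻¹ * gg n (2*i+3)) := by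
            rw [azpow n i hi, ab n i hi]; ring_nf
        _ = (gg n 1) ^ (-(((j:ℤ)+1) % 2)) * gg n (2*i+3) := by
            rw [show -(((j:ℤ)+1) % 2) = (j:ℤ) % 2 + (-1) by omega, zpow_add, zpow_neg_one]
            group
  | pred j ih =>
      have e1 : gg n (2*i+2) ^ (-(j:ℤ)-1) = (gg n (2*i+2))⁻¹ * gg n (2*i+2) ^ (-(j:ℤ)) := by
        rw [show -(j:ℤ)-1 = (-1) + (-(j:ℤ)) by ring, zpow_add, zpow_neg_one]
      have e2 : gg n (2*i+2) ^ (-(-(j:ℤ)-1)) = gg n (2*i+2) ^ (-(-(j:ℤ))) * gg n (2*i+2) := by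
        rw [show -(-(j:ℤ)-1) = -(-(j:ℤ)) + 1 by ring, zpow_add, zpow_one]
      calc gg n (2*i+2) ^ (-(j:ℤ)-1) * gg n (2*i+3) * gg n (2*i+2) ^ (-(-(j:ℤ)-1))
          = (gg n (2*i+2))⁻¹ * (gg n (2*i+2) ^ (-(j:ℤ)) * gg n (2*i+3) *
              gg n (2*i+2) ^ (-(-(j:ℤ)))) * gg n (2*i+2) := by rw [e1, e2]; group
        _ = (gg n (2*i+2))⁻¹ * ((gg n 1) ^ (-((-(j:ℤ)) % 2)) * gg n (2*i+3)) *
            gg n (2*i+2) := by rw [ih]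
        _ = ((gg n (2*i+2))⁻¹ * (gg n 1) ^ (-((-(j:ℤ)) % 2)) * gg n (2*i+2)) *
            ((gg n (2*i+2))⁻¹ * gg n (2*i+3) * gg n (2*i+2)) := by group
        _ = (gg n 1) ^ ((-(j:ℤ)) % 2) * ((gg n 1)⁻¹ * gg n (2*i+3)) := by
            rw [azpowinv n i hi, abinv n i hi]; ring_nf
        _ = (gg n 1) ^ (-((-(j:ℤ)-1) % 2)) * gg n (2*i+3) := by
            rw [show -((-(j:ℤ)-1) % 2) = (-(j:ℤ)) % 2 + (-1) by omega, zpow_add, zpow_neg_one]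
            group

lemma comm_z_b (i : ℕ) (hi : i < n) : Commute (gg n 1) (gg n (2*i+3)) :=
  rel3 n 1 (2*i+3) (by omega) (by omega) (by omega) (by omega) (by omega)

lemma comm_a_a (i j : ℕ) (hi : i < n) (hj : j < n) :
    Commute (gg n (2*i+2)) (gg n (2*j+2)) :=
  rel3 n (2*i+2) (2*j+2) (by omega) (by omega) (by omega) (by omega) (by omega)

lemma comm_a_b (i j : ℕ) (hi : i < n) (hj : j < n) (hij : i ≠ j) :
    Commute (gg n (2*i+2)) (gg n (2*j+3)) :=
  rel3 n (2*i+2) (2*j+3) (by omega) (by omega) (by omega) (by omega) (by omega)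

lemma comm_b_b (i j : ℕ) (hi : i < n) (hj : j < n) :
    Commute (gg n (2*i+3)) (gg n (2*j+3)) :=
  rel3 n (2*i+3) (2*j+3) (by omega) (by omega) (by omega) (by omega) (by omega)

lemma axbk (i : ℕ) (hi : i < n) (x k : ℤ) :
    gg n (2*i+2) ^ x * gg n (2*i+3) ^ k * gg n (2*i+2) ^ (-x) =
      (gg n 1) ^ (-(k * (x % 2))) * gg n (2*i+3) ^ k := by
  have h1 : gg n (2*i+2) ^ x * gg n (2*i+3) ^ k * gg n (2*i+2) ^ (-x) =
      (gg n (2*i+2) ^ x * gg n (2*i+3) * (gg n (2*i+2) ^ x)⁻¹) ^ k := by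
    rw [conj_zpow, zpow_neg]
  have h2 : gg n (2*i+2) ^ x * gg n (2*i+3) * (gg n (2*i+2) ^ x)⁻¹ =
      (gg n 1) ^ (-(x % 2)) * gg n (2*i+3) := by
    rw [← zpow_neg]; exact axb n i hi x
  rw [h1, h2]
  have hc : Commute ((gg n 1) ^ (-(x % 2))) (gg n (2*i+3)) :=
    (comm_z_b n i hi).zpow_left _
  rw [hc.mul_zpow, ← zpow_mul]
  congr 1
  ring

lemma prodA_succ (x : ℕ → ℤ) (m : ℕ) :
    ((List.range (m+1)).map (fun i => gg n (2*i+2) ^ x i)).prod =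
      ((List.range m).map (fun i => gg n (2*i+2) ^ x i)).prod * gg n (2*m+2) ^ x m := by
  rw [List.range_succ, List.map_append, List.prod_append]; simp

lemma prodB_succ (k : ℕ → ℤ) (m : ℕ) :
    ((List.range (m+1)).map (fun i => gg n (2*i+3) ^ k i)).prod =
      ((List.range m).map (fun i => gg n (2*i+3) ^ k i)).prod * gg n (2*m+3) ^ k m := by
  rw [List.range_succ, List.map_append, List.prod_append]; simp

lemma Az (x : ℕ → ℤ) (m : ℕ) (hm : m ≤ n) :
    ((List.range m).map (fun i => gg n (2*i+2) ^ x i)).prod * gg n 1 *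
      (((List.range m).map (fun i => gg n (2*i+2) ^ x i)).prod)⁻¹ =
      gg n 1 ^ eps (∑ j ∈ Finset.range m, x j) := by
  induction m with
  | zero => simp [eps]
  | succ m ih =>
      have hm' : m ≤ n := by omega
      set A := ((List.range m).map (fun i => gg n (2*i+2) ^ x i)).prod with hA
      have step : gg n (2*m+2) ^ x m * gg n 1 * (gg n (2*m+2) ^ x m)⁻¹ =
          gg n 1 ^ eps (x m) := by
        rw [← zpow_neg]
        simpa using axz n m (by omega) (x m) 1
      rw [prodA_succ]
      calc A * gg n (2*m+2) ^ x m * gg n 1 * (A * gg n (2*m+2) ^ x m)⁻¹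
          = A * (gg n (2*m+2) ^ x m * gg n 1 * (gg n (2*m+2) ^ x m)⁻¹) * A⁻¹ := by group
        _ = A * gg n 1 ^ eps (x m) * A⁻¹ := by rw [step]
        _ = (A * gg n 1 * A⁻¹) ^ eps (x m) := by rw [conj_zpow]
        _ = (gg n 1 ^ eps (∑ j ∈ Finset.range m, x j)) ^ eps (x m) := by rw [ih hm']
        _ = gg n 1 ^ eps (∑ j ∈ Finset.range (m+1), x j) := by
            rw [← zpow_mul, Finset.sum_range_succ, eps_add]

lemma Azpow (x : ℕ → ℤ) (m : ℕ) (hm : m ≤ n) (e : ℤ) :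
    ((List.range m).map (fun i => gg n (2*i+2) ^ x i)).prod * gg n 1 ^ e *
      (((List.range m).map (fun i => gg n (2*i+2) ^ x i)).prod)⁻¹ =
      gg n 1 ^ (e * eps (∑ j ∈ Finset.range m, x j)) := by
  rw [← conj_zpow, Az n x m hm, ← zpow_mul]
  congr 1
  ring

lemma comm_z_B (k : ℕ → ℤ) (m : ℕ) (hm : m ≤ n) (w : ℤ) :
    Commute (gg n 1 ^ w) (((List.range m).map (fun i => gg n (2*i+3) ^ k i)).prod) := by
  apply Commute.list_prod_right
  intro y hy
  simp only [List.mem_map, List.mem_range] at hy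
  obtain ⟨i, hi, rfl⟩ := hy
  exact ((comm_z_b n i (by omega)).zpow_zpow w (k i))

lemma comm_au_B (x k : ℕ → ℤ) (m : ℕ) (hm : m < n) :
    Commute (gg n (2*m+2) ^ x m)
      (((List.range m).map (fun i => gg n (2*i+3) ^ k i)).prod) := by
  apply Commute.list_prod_right
  intro y hy
  simp only [List.mem_map, List.mem_range] at hy
  obtain ⟨i, hi, rfl⟩ := hy
  exact ((comm_a_b n m i hm (by omega) (by omega)).zpow_zpow (x m) (k i))

lemma comm_A_bu (x k : ℕ → ℤ) (m : ℕ) (hm : m < n) :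
    Commute (((List.range m).map (fun i => gg n (2*i+2) ^ x i)).prod)
      (gg n (2*m+3) ^ k m) := by
  apply Commute.list_prod_left
  intro y hy
  simp only [List.mem_map, List.mem_range] at hy
  obtain ⟨i, hi, rfl⟩ := hy
  exact ((comm_a_b n i m (by omega) hm (by omega)).zpow_zpow (x i) (k m))

lemma main (x k : ℕ → ℤ) (m : ℕ) (hm : m ≤ n) :
    ((List.range m).map (fun i => gg n (2*i+2) ^ x i)).prod *
      ((List.range m).map (fun i => gg n (2*i+3) ^ k i)).prod *
      (((List.range m).map (fun i => gg n (2*i+2) ^ x i)).prod)⁻¹ =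
    gg n 1 ^ (-(∑ i ∈ Finset.range m, k i * (x i % 2) * eps (∑ j ∈ Finset.range i, x j))) *
      ((List.range m).map (fun i => gg n (2*i+3) ^ k i)).prod := by
  induction m with
  | zero => simp
  | succ m ih =>
      have hm' : m ≤ n := by omega
      have hmn : m < n := by omega
      rw [prodA_succ, prodB_succ]
      set A := ((List.range m).map (fun i => gg n (2*i+2) ^ x i)).prod with hA
      set B := ((List.range m).map (fun i => gg n (2*i+3) ^ k i)).prod with hB
      set au := gg n (2*m+2) ^ x m with hau
      set bu := gg n (2*m+3) ^ k m with hbu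
      have hc1 : au * B = B * au := (comm_au_B n x k m hmn).eq
      have h3 : au * bu * au⁻¹ = gg n 1 ^ (-(k m * (x m % 2))) * bu := by
        rw [hau, hbu, ← zpow_neg]
        exact axbk n m hmn (x m) (k m)
      have h5 : A * bu * A⁻¹ = bu := by
        rw [(comm_A_bu n x k m hmn).eq, mul_inv_cancel_right]
      have h4 := Azpow n x m hm' (-(k m * (x m % 2)))
      have IH := ih hm'
      calc (A * au) * (B * bu) * (A * au)⁻¹
          = A * ((au * B) * bu * au⁻¹) * A⁻¹ := by group
        _ = A * ((B * au) * bu * au⁻¹) * A⁻¹ := by rw [hc1]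
        _ = (A * B * A⁻¹) * (A * (au * bu * au⁻¹) * A⁻¹) := by group
        _ = (A * B * A⁻¹) * (A * (gg n 1 ^ (-(k m * (x m % 2))) * bu) * A⁻¹) := by rw [h3]
        _ = (A * B * A⁻¹) * (A * gg n 1 ^ (-(k m * (x m % 2))) * A⁻¹) * (A * bu * A⁻¹) := by
            group
        _ = (gg n 1 ^ (-(∑ i ∈ Finset.range m, k i * (x i % 2) *
              eps (∑ j ∈ Finset.range i, x j))) * B) *
            gg n 1 ^ (-(k m * (x m % 2)) * eps (∑ j ∈ Finset.range m, x j)) * bu := by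
            rw [IH, h4, h5]
        _ = gg n 1 ^ (-(∑ i ∈ Finset.range m, k i * (x i % 2) *
              eps (∑ j ∈ Finset.range i, x j))) *
            (B * gg n 1 ^ (-(k m * (x m % 2)) * eps (∑ j ∈ Finset.range m, x j))) * bu := by
            group
        _ = gg n 1 ^ (-(∑ i ∈ Finset.range m, k i * (x i % 2) *
              eps (∑ j ∈ Finset.range i, x j))) *
            (gg n 1 ^ (-(k m * (x m % 2)) * eps (∑ j ∈ Finset.range m, x j)) * B) * bu := by
            rw [(comm_z_B n k m hm' _).eq]
        _ = (gg n 1 ^ (-(∑ i ∈ Finset.range m, k i * (x i % 2) *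
              eps (∑ j ∈ Finset.range i, x j))) *
            gg n 1 ^ (-(k m * (x m % 2)) * eps (∑ j ∈ Finset.range m, x j))) * (B * bu) := by
            group
        _ = gg n 1 ^ (-(∑ i ∈ Finset.range (m+1), k i * (x i % 2) *
              eps (∑ j ∈ Finset.range i, x j))) * (B * bu) := by
            rw [← zpow_add, Finset.sum_range_succ]
            congr 2
            ring

end

theorem stmt9 (n : ℕ) (x k : ℕ → ℤ) :
    ((List.range n).map (fun i => gg n (2*i+2) ^ x i)).prod *
      ((List.range n).map (fun i => gg n (2*i+3) ^ k i)).prod *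
      (((List.range n).map (fun i => gg n (2*i+2) ^ x i)).prod)⁻¹ =
    gg n 1 ^ (-(∑ i ∈ Finset.range n, k i * (x i % 2) * eps (∑ j ∈ Finset.range i, x j))) *
      ((List.range n).map (fun i => gg n (2*i+3) ^ k i)).prod :=
  main n x k n le_rfl
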